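/- arXiv:2006.12158 — 2 statements merged into one kernel-verified Lean document; each statement's English description precedes it below -/
import Mathlib

section
/- Let n ≥ 2 and let ξ₁, η ∈ ℝ^{1+n} be lightlike vectors. Then for every ε > 0 there exist lightlike vectors ξ₂, ξ₃ ∈ ℝ^{1+n} with ‖ξ₂ − ξ₁‖ < ε and ‖ξ₃ − ξ₁‖ < ε such that η lies in the real linear span of ξ₁, ξ₂, ξ₃. -/
open RealInnerProductSpace


/-- The Minkowski quadratic form `q(v) = -(v⁰)² + Σ_{i=1}^n (vⁱ)²` on `ℝ^{1+n}`,
here modeled as the Euclidean space `EuclideanSpace ℝ (Fin (n+1))` so that `‖·‖`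
is the Euclidean norm. -/
def minkQ (n : ℕ) (v : EuclideanSpace ℝ (Fin (n + 1))) : ℝ :=
  -(v 0) ^ 2 + ∑ i : Fin n, (v i.succ) ^ 2

/-- A vector of `ℝ^{1+n}` is lightlike if it is nonzero and null for the
Minkowski quadratic form. -/
def IsLightlike (n : ℕ) (v : EuclideanSpace ℝ (Fin (n + 1))) : Prop :=
  v ≠ 0 ∧ minkQ n v = 0

lemma exists_unit_orth (n : ℕ) (hn : 2 ≤ n) (X Y : EuclideanSpace ℝ (Fin n)) (hX : X ≠ 0) :
    ∃ (f : EuclideanSpace ℝ (Fin n)) (p q : ℝ),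
      ⟪f, f⟫ = 1 ∧ ⟪X, f⟫ = 0 ∧ Y = p • X + q • f := by
  have hXX : (⟪X, X⟫ : ℝ) ≠ 0 := inner_self_ne_zero.mpr hX
  set p₀ : ℝ := ⟪X, Y⟫ / ⟪X, X⟫ with hp₀
  set z : EuclideanSpace ℝ (Fin n) := Y - p₀ • X with hz
  have hXz : ⟪X, z⟫ = 0 := by
    simp only [hz, inner_sub_right, real_inner_smul_right, hp₀]
    rw [div_mul_cancel₀ _ hXX, sub_self]
  by_cases hz0 : z = 0
  · have h1 : Module.finrank ℝ (Submodule.span ℝ {X}) = 1 := finrank_span_singleton hX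
    have h2 := Submodule.finrank_add_finrank_orthogonal (𝕜 := ℝ) (Submodule.span ℝ {X})
    rw [h1, finrank_euclideanSpace_fin] at h2
    have h3 : Module.finrank ℝ (Submodule.span ℝ {X})ᗮ ≠ 0 := by omega
    have h4 : (Submodule.span ℝ {X})ᗮ ≠ ⊥ := fun h => h3 (by rw [h]; simp)
    obtain ⟨w, hw, hw0⟩ := Submodule.exists_mem_ne_zero_of_ne_bot h4
    refine ⟨‖w‖⁻¹ • w, p₀, 0, ?_, ?_, ?_⟩
    · rw [real_inner_smul_left, real_inner_smul_right, real_inner_self_eq_norm_sq]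
      have : ‖w‖ ≠ 0 := norm_ne_zero_iff.mpr hw0
      field_simp
    · rw [real_inner_smul_right, hw X (Submodule.mem_span_singleton_self X), mul_zero]
    · have : Y = p₀ • X + z := by rw [hz]; abel
      rw [this, hz0, zero_smul]
  · have hnz : ‖z‖ ≠ 0 := norm_ne_zero_iff.mpr hz0
    refine ⟨‖z‖⁻¹ • z, p₀, ‖z‖, ?_, ?_, ?_⟩
    · rw [real_inner_smul_left, real_inner_smul_right, real_inner_self_eq_norm_sq]
      field_simp
    · rw [real_inner_smul_right, hXz, mul_zero]
    · rw [smul_smul, mul_inv_cancel₀ hnz, one_smul, hz]; abel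

lemma sum_sq_expand {n : ℕ} (u v : Fin n → ℝ) (a b : ℝ) :
    ∑ i, (a * u i + b * v i) ^ 2 =
      a ^ 2 * (∑ i, u i * u i) + (2 * a * b) * (∑ i, u i * v i)
        + b ^ 2 * (∑ i, v i * v i) := by
  rw [Finset.mul_sum, Finset.mul_sum, Finset.mul_sum, ← Finset.sum_add_distrib,
    ← Finset.sum_add_distrib]
  exact Finset.sum_congr rfl fun i _ => by ring

/-- Given lightlike vectors `ξ₁, η` in `ℝ^{1+n}` (`n ≥ 2`) and any
`ε > 0`, there are lightlike vectors `ξ₂, ξ₃` within distance `ε` of `ξ₁` such that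
`η` lies in the real linear span of `ξ₁, ξ₂, ξ₃`. -/
theorem lightlike_span_perturbation
    (n : ℕ) (hn : 2 ≤ n) (ξ₁ η : EuclideanSpace ℝ (Fin (n + 1)))
    (h₁ : IsLightlike n ξ₁) (hη : IsLightlike n η) :
    ∀ ε : ℝ, 0 < ε →
      ∃ ξ₂ ξ₃ : EuclideanSpace ℝ (Fin (n + 1)),
        IsLightlike n ξ₂ ∧ IsLightlike n ξ₃ ∧
        ‖ξ₂ - ξ₁‖ < ε ∧ ‖ξ₃ - ξ₁‖ < ε ∧
        η ∈ Submodule.span ℝ ({ξ₁, ξ₂, ξ₃} : Set (EuclideanSpace ℝ (Fin (n + 1)))) := by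
  intro ε hε
  obtain ⟨hξ1ne, hξ1q⟩ := h₁
  set t : ℝ := ξ₁ 0 with ht
  have hsum : ∑ i : Fin n, ξ₁ i.succ * ξ₁ i.succ = t ^ 2 := by
    unfold minkQ at hξ1q
    have : ∑ i : Fin n, ξ₁ i.succ * ξ₁ i.succ = ∑ i : Fin n, (ξ₁ i.succ) ^ 2 :=
      Finset.sum_congr rfl fun i _ => (sq (ξ₁ i.succ)).symm
    linarith
  have ht0 : t ≠ 0 := by
    intro h
    apply hξ1ne
    have hzero : ∀ i : Fin n, ξ₁ i.succ = 0 := by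
      intro i
      have hnn : ∀ j ∈ (Finset.univ : Finset (Fin n)), (0:ℝ) ≤ ξ₁ j.succ * ξ₁ j.succ :=
        fun j _ => mul_self_nonneg _
      have := (Finset.sum_eq_zero_iff_of_nonneg hnn).mp
        (by rw [hsum, h]; ring) i (Finset.mem_univ i)
      exact mul_self_eq_zero.mp this
    ext j
    refine Fin.cases ?_ ?_ j
    · simpa using h
    · intro i; simpa using hzero i
  -- spatial parts as Euclidean vectors, to get the orthogonal unit vector
  set X : EuclideanSpace ℝ (Fin n) := WithLp.toLp 2 (fun i => ξ₁ i.succ : Fin n → ℝ) with hXdef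
  set Y : EuclideanSpace ℝ (Fin n) := WithLp.toLp 2 (fun i => η i.succ : Fin n → ℝ) with hYdef
  have hXi : ∀ i, X i = ξ₁ i.succ := fun i => rfl
  have hYi : ∀ i, Y i = η i.succ := fun i => rfl
  have hXX : ⟪X, X⟫ = t ^ 2 := by
    rw [PiLp.inner_apply]
    simpa [hXi, sq] using hsum
  have hXne : X ≠ 0 := by
    intro h
    apply ht0
    have h0 : (⟪X, X⟫ : ℝ) = 0 := by rw [h]; simp
    rw [hXX] at h0
    exact pow_eq_zero_iff (two_ne_zero) |>.mp h0
  obtain ⟨f, p, q, hff, hXf, hYpq⟩ := exists_unit_orth n hn X Y hXne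
  -- translate those facts into sums
  have hff' : ∑ i, f i * f i = 1 := by
    rw [PiLp.inner_apply] at hff; simpa [sq] using hff
  have hXf' : ∑ i, ξ₁ i.succ * f i = 0 := by
    rw [PiLp.inner_apply] at hXf; simpa [hXi, mul_comm] using hXf
  have hYpq' : ∀ i, η i.succ = p * ξ₁ i.succ + q * f i := by
    intro i
    have h5 : Y i = (p • X + q • f) i := by rw [← hYpq]
    simpa [hXi, hYi] using h5
  -- the rotation angle
  have htabs : (0:ℝ) < |t| := abs_pos.mpr ht0
  set θ : ℝ := min 1 (ε / (2 * |t|)) with hθdef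
  have hθpos : 0 < θ := lt_min one_pos (by positivity)
  have hθ1 : θ ≤ 1 := min_le_left _ _
  have hθε : θ ≤ ε / (2 * |t|) := min_le_right _ _
  have hpi : (3:ℝ) < Real.pi := Real.pi_gt_three
  have hsinpos : 0 < Real.sin θ := Real.sin_pos_of_pos_of_lt_pi hθpos (by linarith)
  have hsinle : Real.sin θ ≤ θ := Real.sin_le hθpos.le
  have hcospos : 0 < Real.cos θ := Real.cos_pos_of_mem_Ioo ⟨by linarith, by linarith⟩
  have hpyth := Real.sin_sq_add_cos_sq θ
  have hcoslt : Real.cos θ < 1 := by nlinarith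
  have honecos : 1 - Real.cos θ ≤ θ ^ 2 := by nlinarith
  set c : ℝ := Real.cos θ with hc
  set sθ : ℝ := Real.sin θ with hs
  -- the two perturbed lightlike vectors
  obtain ⟨ξ₂, hξ2app0, hξ2apps⟩ :
      ∃ ζ : EuclideanSpace ℝ (Fin (n + 1)), ζ 0 = t ∧
        ∀ i : Fin n, ζ i.succ = c * ξ₁ i.succ + (t * sθ) * f i :=
    ⟨(WithLp.equiv 2 (Fin (n + 1) → ℝ)).symm
        (Fin.cons t (fun i => c * ξ₁ i.succ + (t * sθ) * f i)),
      by simp, fun i => by simp⟩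
  obtain ⟨ξ₃, hξ3app0, hξ3apps⟩ :
      ∃ ζ : EuclideanSpace ℝ (Fin (n + 1)), ζ 0 = t ∧
        ∀ i : Fin n, ζ i.succ = c * ξ₁ i.succ + (-(t * sθ)) * f i :=
    ⟨(WithLp.equiv 2 (Fin (n + 1) → ℝ)).symm
        (Fin.cons t (fun i => c * ξ₁ i.succ + (-(t * sθ)) * f i)),
      by simp, fun i => by simp⟩
  have keysum : ∀ b : ℝ, ∑ i : Fin n, (c * ξ₁ i.succ + b * f i) ^ 2 = c ^ 2 * t ^ 2 + b ^ 2 := by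
    intro b
    rw [sum_sq_expand, hsum, hXf', hff']
    ring
  have hlight₂ : IsLightlike n ξ₂ := by
    constructor
    · intro h
      apply ht0
      rw [h] at hξ2app0
      simpa using hξ2app0.symm
    · unfold minkQ
      rw [hξ2app0]
      rw [Finset.sum_congr rfl fun i _ => by rw [hξ2apps i]]
      rw [keysum]
      linear_combination t ^ 2 * hpyth
  have hlight₃ : IsLightlike n ξ₃ := by
    constructor
    · intro h
      apply ht0
      rw [h] at hξ3app0
      simpa using hξ3app0.symm
    · unfold minkQ
      rw [hξ3app0]
      rw [Finset.sum_congr rfl fun i _ => by rw [hξ3apps i]]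
      rw [keysum]
      linear_combination t ^ 2 * hpyth
  -- distance bounds
  have hsqbound : (c - 1) ^ 2 * t ^ 2 + (t * sθ) ^ 2 < ε ^ 2 := by
    have h2 : θ * (2 * |t|) ≤ ε := (le_div_iff₀ (by positivity)).mp hθε
    have h3 : (θ * (2 * |t|)) ^ 2 ≤ ε ^ 2 :=
      pow_le_pow_left₀ (by positivity) h2 2
    have h3' : 4 * (θ ^ 2 * t ^ 2) ≤ ε ^ 2 := by
      calc 4 * (θ ^ 2 * t ^ 2) = (θ * (2 * |t|)) ^ 2 := by rw [← sq_abs t]; ring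
        _ ≤ ε ^ 2 := h3
    have e1 : (c - 1) ^ 2 * t ^ 2 + (t * sθ) ^ 2 = 2 * (1 - c) * t ^ 2 := by
      linear_combination t ^ 2 * hpyth
    have e2 : (1 - c) * t ^ 2 ≤ θ ^ 2 * t ^ 2 :=
      mul_le_mul_of_nonneg_right honecos (sq_nonneg t)
    have hε2 : 0 < ε ^ 2 := pow_pos hε 2
    linarith
  have hnormsq : ∀ (ζ : EuclideanSpace ℝ (Fin (n + 1))) (b : ℝ),
      ζ 0 = t → (∀ i : Fin n, ζ i.succ = c * ξ₁ i.succ + b * f i) →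
      ‖ζ - ξ₁‖ ^ 2 = (c - 1) ^ 2 * t ^ 2 + b ^ 2 := by
    intro ζ b h0 hsucc
    rw [EuclideanSpace.norm_eq, Real.sq_sqrt (by positivity), Fin.sum_univ_succ]
    have e0 : (ζ - ξ₁) 0 = 0 := by simp [h0, ht]
    have es : ∀ i : Fin n, (ζ - ξ₁) i.succ = (c - 1) * ξ₁ i.succ + b * f i := by
      intro i
      simp only [PiLp.sub_apply, hsucc i]
      ring
    rw [e0]
    rw [Finset.sum_congr rfl fun i _ => by
      rw [Real.norm_eq_abs, sq_abs, es i]]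
    rw [sum_sq_expand, hsum, hXf', hff']
    norm_num
  have hn₂ : ‖ξ₂ - ξ₁‖ < ε := by
    have h := hnormsq ξ₂ (t * sθ) hξ2app0 hξ2apps
    have : ‖ξ₂ - ξ₁‖ ^ 2 < ε ^ 2 := by rw [h]; exact hsqbound
    exact lt_of_pow_lt_pow_left₀ 2 hε.le this
  have hn₃ : ‖ξ₃ - ξ₁‖ < ε := by
    have h := hnormsq ξ₃ (-(t * sθ)) hξ3app0 hξ3apps
    have : ‖ξ₃ - ξ₁‖ ^ 2 < ε ^ 2 := by
      rw [h]
      calc (c - 1) ^ 2 * t ^ 2 + (-(t * sθ)) ^ 2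
          = (c - 1) ^ 2 * t ^ 2 + (t * sθ) ^ 2 := by ring
        _ < ε ^ 2 := hsqbound
    exact lt_of_pow_lt_pow_left₀ 2 hε.le this
  -- span membership
  have hc1 : c - 1 ≠ 0 := sub_ne_zero.mpr (ne_of_lt hcoslt)
  have hts : t * sθ ≠ 0 := mul_ne_zero ht0 (ne_of_gt hsinpos)
  obtain ⟨a, b, c', habc, hcoef1, hcoef2⟩ :
      ∃ a b c' : ℝ, a + b + c' = η 0 / t ∧ a + (b + c') * c = p ∧
        (b - c') * (t * sθ) = q := by
    refine ⟨η 0 / t - (p - η 0 / t) / (c - 1),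
      ((p - η 0 / t) / (c - 1) + q / (t * sθ)) / 2,
      ((p - η 0 / t) / (c - 1) - q / (t * sθ)) / 2, by ring, ?_, ?_⟩
    · linear_combination div_mul_cancel₀ (p - η 0 / t) hc1
    · linear_combination div_mul_cancel₀ q hts
  have hrepr : η = a • ξ₁ + b • ξ₂ + c' • ξ₃ := by
    ext j
    have happ : (a • ξ₁ + b • ξ₂ + c' • ξ₃) j = a * ξ₁ j + b * ξ₂ j + c' * ξ₃ j := by
      simp
    rw [happ]
    refine Fin.cases ?_ ?_ j
    · rw [hξ2app0, hξ3app0, ← ht]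
      linear_combination (-t) * habc - div_mul_cancel₀ (η 0) ht0
    · intro i
      rw [hξ2apps i, hξ3apps i]
      linear_combination hYpq' i - ξ₁ i.succ * hcoef1 - f i * hcoef2
  refine ⟨ξ₂, ξ₃, hlight₂, hlight₃, hn₂, hn₃, ?_⟩
  rw [hrepr]
  refine Submodule.add_mem _ (Submodule.add_mem _ ?_ ?_) ?_ <;>
    refine Submodule.smul_mem _ _ (Submodule.subset_span ?_) <;> simp
end

section
/- Let n ≥ 2 and let ξ₀, ξ₁ ∈ ℝ^{1+n} be future-pointing lightlike vectors such that ξ₀ is not a real scalar multiple of ξ₁. Then for every ε > 0 there exist an open set V ⊆ ℝ^{1+n} containing ξ₀ and a future-pointing lightlike vector ξ₂ with ‖ξ₂ − ξ₁‖ < ε such that: for every η ∈ V there exists a future-pointing lightlike vector ξ₃ with ‖ξ₃ − ξ₁‖ < ε, η lies in the real linear span of ξ₁, ξ₂, ξ₃, and η is not a real scalar multiple of ξ_j for any j = 1, 2, 3. -/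
/-- A vector of `ℝ^{1+n}` is lightlike if it is nonzero and null for the
Minkowski quadratic form; it is future-pointing lightlike if moreover `v⁰ > 0`. -/
def IsFutureLightlike (n : ℕ) (v : EuclideanSpace ℝ (Fin (n + 1))) : Prop :=
  v ≠ 0 ∧ minkQ n v = 0 ∧ 0 < v 0


noncomputable section
open Real Submodule
def mB (n : ℕ) (v w : EuclideanSpace ℝ (Fin (n + 1))) : ℝ :=
  (inner ℝ v w : ℝ) - 2 * v 0 * w 0

lemma inner_eq_sum (n : ℕ) (v w : EuclideanSpace ℝ (Fin (n + 1))) :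
    (inner ℝ v w : ℝ) = ∑ i, v i * w i := by
  simp [PiLp.inner_apply, RCLike.inner_apply, mul_comm]

lemma mB_self (n : ℕ) (v : EuclideanSpace ℝ (Fin (n + 1))) : mB n v v = minkQ n v := by
  simp only [mB, minkQ, inner_eq_sum, Fin.sum_univ_succ]
  simp_rw [← sq]
  ring

lemma mB_comm (n : ℕ) (v w : EuclideanSpace ℝ (Fin (n + 1))) : mB n v w = mB n w v := by
  simp only [mB, real_inner_comm v w]; ring

lemma mB_add_right (n : ℕ) (u v w : EuclideanSpace ℝ (Fin (n + 1))) :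
    mB n u (v + w) = mB n u v + mB n u w := by
  simp only [mB, inner_add_right, PiLp.add_apply]; ring

lemma mB_smul_right (n : ℕ) (a : ℝ) (u v : EuclideanSpace ℝ (Fin (n + 1))) :
    mB n u (a • v) = a * mB n u v := by
  simp only [mB, real_inner_smul_right, PiLp.smul_apply, smul_eq_mul]; ring

lemma mB_add_left (n : ℕ) (u v w : EuclideanSpace ℝ (Fin (n + 1))) :
    mB n (u + v) w = mB n u w + mB n v w := by
  rw [mB_comm, mB_add_right, mB_comm n w u, mB_comm n w v]

lemma mB_smul_left (n : ℕ) (a : ℝ) (u v : EuclideanSpace ℝ (Fin (n + 1))) :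
    mB n (a • u) v = a * mB n u v := by
  rw [mB_comm, mB_smul_right, mB_comm]

lemma minkQ_comb (n : ℕ) (a b c : ℝ) (u v w : EuclideanSpace ℝ (Fin (n + 1))) :
    minkQ n (a • u + b • v + c • w) =
      a ^ 2 * minkQ n u + b ^ 2 * minkQ n v + c ^ 2 * minkQ n w
      + 2 * (a * b) * mB n u v + 2 * (a * c) * mB n u w + 2 * (b * c) * mB n v w := by
  conv_lhs => rw [← mB_self]
  simp only [mB_add_left, mB_add_right, mB_smul_left, mB_smul_right,
    mB_comm n v u, mB_comm n w u, mB_comm n w v]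
  simp only [mB_self]
  ring

lemma mB_comb_right (n : ℕ) (a b c : ℝ) (x u v w : EuclideanSpace ℝ (Fin (n + 1))) :
    mB n x (a • u + b • v + c • w) = a * mB n x u + b * mB n x v + c * mB n x w := by
  simp only [mB_add_right, mB_smul_right]

lemma coord_abs_le_norm (n : ℕ) (v : EuclideanSpace ℝ (Fin (n + 1))) (i : Fin (n + 1)) :
    |v i| ≤ ‖v‖ := by
  have h := abs_real_inner_le_norm (EuclideanSpace.single i (1 : ℝ)) v
  rw [EuclideanSpace.inner_single_left] at h
  simpa using h

lemma abs_mB_le (n : ℕ) (v w : EuclideanSpace ℝ (Fin (n + 1))) :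
    |mB n v w| ≤ 3 * ‖v‖ * ‖w‖ := by
  have h1 := abs_real_inner_le_norm v w
  have h2 := coord_abs_le_norm n v 0
  have h3 := coord_abs_le_norm n w 0
  have h4 : |2 * v 0 * w 0| = 2 * |v 0| * |w 0| := by
    rw [abs_mul, abs_mul]; simp
  have h5 : |mB n v w| ≤ |(inner ℝ v w : ℝ)| + |2 * v 0 * w 0| := by
    simpa [mB] using abs_sub (inner ℝ v w : ℝ) (2 * v 0 * w 0)
  have hv : (0:ℝ) ≤ ‖v‖ := norm_nonneg _
  have hw : (0:ℝ) ≤ ‖w‖ := norm_nonneg _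
  nlinarith [abs_nonneg (v 0), abs_nonneg (w 0)]
set_option maxHeartbeats 4000000 in
/-- Let `ξ₀, ξ₁` be future-pointing lightlike vectors in `ℝ^{1+n}`
(`n ≥ 2`) with `ξ₀` not a real multiple of `ξ₁`. For every `ε > 0` there are an open
neighborhood `V` of `ξ₀` and a future-pointing lightlike `ξ₂` with `‖ξ₂ - ξ₁‖ < ε`
such that every `η ∈ V` admits a future-pointing lightlike `ξ₃` with `‖ξ₃ - ξ₁‖ < ε`,
`η ∈ span ℝ {ξ₁, ξ₂, ξ₃}`, and `η` is not a real multiple of any of `ξ₁, ξ₂, ξ₃`. -/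
theorem lightlike_span_perturbation_open
    (n : ℕ) (hn : 2 ≤ n) (ξ₀ ξ₁ : EuclideanSpace ℝ (Fin (n + 1)))
    (h₀ : IsFutureLightlike n ξ₀) (h₁ : IsFutureLightlike n ξ₁)
    (h₀₁ : ∀ c : ℝ, ξ₀ ≠ c • ξ₁) :
    ∀ ε : ℝ, 0 < ε →
      ∃ (V : Set (EuclideanSpace ℝ (Fin (n + 1)))) (ξ₂ : EuclideanSpace ℝ (Fin (n + 1))),
        IsOpen V ∧ ξ₀ ∈ V ∧ IsFutureLightlike n ξ₂ ∧ ‖ξ₂ - ξ₁‖ < ε ∧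
        ∀ η ∈ V, ∃ ξ₃ : EuclideanSpace ℝ (Fin (n + 1)),
          IsFutureLightlike n ξ₃ ∧ ‖ξ₃ - ξ₁‖ < ε ∧
          η ∈ Submodule.span ℝ ({ξ₁, ξ₂, ξ₃} : Set (EuclideanSpace ℝ (Fin (n + 1)))) ∧
          (∀ c : ℝ, η ≠ c • ξ₁) ∧ (∀ c : ℝ, η ≠ c • ξ₂) ∧ (∀ c : ℝ, η ≠ c • ξ₃) := by
  intro ε hε
  obtain ⟨hξ₁ne, hq1, ht⟩ := h₁
  set t := ξ₁ 0 with ht_def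
  set e0 : EuclideanSpace ℝ (Fin (n+1)) := EuclideanSpace.single (0 : Fin (n+1)) (1:ℝ) with he0_def
  have he00 : e0 0 = 1 := by simp [he0_def, EuclideanSpace.single_apply]
  have heQ : minkQ n e0 = -1 := by
    simp [minkQ, he0_def, EuclideanSpace.single_apply, Fin.succ_ne_zero]
  have hspan_ne_top : Submodule.span ℝ ({e0, ξ₁} : Set _) ≠ ⊤ := by
    intro htop
    have h1 : Module.finrank ℝ (EuclideanSpace ℝ (Fin (n+1))) = n + 1 :=
      finrank_euclideanSpace_fin
    have h2 : Module.finrank ℝ (Submodule.span ℝ ({e0, ξ₁} : Set _)) ≤ 2 := by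
      classical
      refine le_trans (finrank_span_le_card _) ?_
      rw [Set.toFinset_insert, Set.toFinset_singleton]
      exact (Finset.card_insert_le _ _).trans (by simp)
    rw [htop, finrank_top, h1] at h2
    omega
  have horth : (Submodule.span ℝ ({e0, ξ₁} : Set _))ᗮ ≠ ⊥ := fun hbot =>
    hspan_ne_top (Submodule.orthogonal_eq_bot_iff.mp hbot)
  obtain ⟨w', hw'mem, hw'ne⟩ := Submodule.exists_mem_ne_zero_of_ne_bot horth
  set w : EuclideanSpace ℝ (Fin (n+1)) := ‖w'‖⁻¹ • w' with hw_def
  have hw'n : ‖w'‖ ≠ 0 := norm_ne_zero_iff.mpr hw'ne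
  have hw_norm : ‖w‖ = 1 := by
    rw [hw_def, norm_smul, norm_inv, norm_norm, inv_mul_cancel₀ hw'n]
  have hie : (inner ℝ e0 w' : ℝ) = 0 :=
    Submodule.inner_right_of_mem_orthogonal (Submodule.subset_span (by simp)) hw'mem
  have hi1 : (inner ℝ ξ₁ w' : ℝ) = 0 :=
    Submodule.inner_right_of_mem_orthogonal (Submodule.subset_span (by simp)) hw'mem
  have hwe0 : (inner ℝ e0 w : ℝ) = 0 := by rw [hw_def, real_inner_smul_right, hie]; ring
  have hw1 : (inner ℝ ξ₁ w : ℝ) = 0 := by rw [hw_def, real_inner_smul_right, hi1]; ring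
  have hw0 : w 0 = 0 := by
    have h := hwe0
    rw [he0_def, EuclideanSpace.inner_single_left] at h
    simpa using h
  have hB11 : mB n ξ₁ ξ₁ = 0 := by rw [mB_self]; exact hq1
  have hB1e : mB n ξ₁ e0 = -t := by
    rw [mB, he0_def, EuclideanSpace.inner_single_right]
    simp [← ht_def]
    ring
  have hBee : mB n e0 e0 = -1 := by rw [mB_self]; exact heQ
  have hB1w : mB n ξ₁ w = 0 := by rw [mB, hw1, hw0]; ring
  have hBew : mB n e0 w = 0 := by rw [mB, hwe0, hw0]; ring
  have hBww : mB n w w = 1 := by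
    rw [mB, real_inner_self_eq_norm_sq, hw_norm, hw0]; ring
  have he0norm : ‖e0‖ = 1 := by
    rw [he0_def]; simpa using EuclideanSpace.norm_single (𝕜 := ℝ) (0 : Fin (n+1)) 1
  have hQw : minkQ n w = 1 := by rw [← mB_self]; exact hBww
  clear_value t e0 w
  clear hw_def hw'n hie hi1 hw'mem hw'ne
  -- δ
  set C : ℝ := ‖ξ₁‖ + 2*t + 1 with hC_def
  have hC : 0 < C := by positivity
  clear_value C
  set δ : ℝ := min 1 (ε / C) with hδ_def
  have hδpos : 0 < δ := lt_min one_pos (div_pos hε hC)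
  have hδ1 : δ ≤ 1 := min_le_left _ _
  have hδε : δ ≤ ε / C := min_le_right _ _
  clear_value δ
  have hcosδ : Real.cos δ < 1 := by
    rcases lt_or_eq_of_le (Real.cos_le_one δ) with h | h
    · exact h
    · exfalso
      have hπ := Real.pi_gt_three
      have := (Real.cos_eq_one_iff_of_lt_of_lt (by linarith) (by linarith)).mp h
      linarith
  -- properties of the candidate vectors
  have key : ∀ θ : ℝ,
      minkQ n (Real.cos θ • ξ₁ + (t*(1 - Real.cos θ)) • e0 + (t * Real.sin θ) • w) = 0 ∧
      (Real.cos θ • ξ₁ + (t*(1 - Real.cos θ)) • e0 + (t * Real.sin θ) • w) 0 = t ∧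
      mB n ξ₁ (Real.cos θ • ξ₁ + (t*(1 - Real.cos θ)) • e0 + (t * Real.sin θ) • w)
        = -(t^2*(1 - Real.cos θ)) ∧
      ‖(Real.cos θ • ξ₁ + (t*(1 - Real.cos θ)) • e0 + (t * Real.sin θ) • w) - ξ₁‖
        ≤ (1 - Real.cos θ)*(‖ξ₁‖ + t) + t * |Real.sin θ| := by
    intro θ
    have hsc := Real.sin_sq_add_cos_sq θ
    refine ⟨?_, ?_, ?_, ?_⟩
    · rw [minkQ_comb, hq1, heQ]
      rw [hQw, hB1e, hB1w, hBew]
      linear_combination (t^2) * hsc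
    · simp only [PiLp.add_apply, PiLp.smul_apply, smul_eq_mul, he00, hw0, ← ht_def]
      ring
    · rw [mB_comb_right, hB11, hB1e, hB1w]; ring
    · have hid : (Real.cos θ • ξ₁ + (t*(1 - Real.cos θ)) • e0 + (t * Real.sin θ) • w) - ξ₁
          = (Real.cos θ - 1) • ξ₁ + (t*(1 - Real.cos θ)) • e0 + (t * Real.sin θ) • w := by
        module
      rw [hid]
      refine le_trans (norm_add₃_le) ?_
      rw [norm_smul, norm_smul, norm_smul, hw_norm]
      rw [he0norm]
      have h1 : ‖(Real.cos θ - 1 : ℝ)‖ = 1 - Real.cos θ := by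
        rw [Real.norm_eq_abs, abs_sub_comm, abs_of_nonneg (by linarith [Real.cos_le_one θ])]
      have h2 : ‖(t*(1 - Real.cos θ) : ℝ)‖ = t*(1 - Real.cos θ) := by
        rw [Real.norm_eq_abs, abs_of_nonneg (mul_nonneg ht.le (by linarith [Real.cos_le_one θ]))]
      have h3 : ‖(t * Real.sin θ : ℝ)‖ = t * |Real.sin θ| := by
        rw [Real.norm_eq_abs, abs_mul, abs_of_nonneg ht.le]
      rw [h1, h2, h3]
      exact le_of_eq (by ring)
  -- dichotomy: one of the two candidates lies outside span {ξ₀, ξ₁}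
  have hdich : ∃ θ : ℝ, Real.cos θ = Real.cos δ ∧ |Real.sin θ| = |Real.sin δ| ∧
      (Real.cos θ • ξ₁ + (t*(1 - Real.cos θ)) • e0 + (t * Real.sin θ) • w) ∉
        Submodule.span ℝ ({ξ₀, ξ₁} : Set _) := by
    by_contra hcon
    push_neg at hcon
    have hp := hcon δ rfl rfl
    have hm := hcon (-δ) (by rw [Real.cos_neg]) (by rw [Real.sin_neg, abs_neg])
    rw [Real.cos_neg, Real.sin_neg] at hm
    set P := Submodule.span ℝ ({ξ₀, ξ₁} : Set (EuclideanSpace ℝ (Fin (n+1)))) with hP_def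
    have hξ₁P : ξ₁ ∈ P := Submodule.subset_span (by simp)
    have hsum : (2 * Real.cos δ) • ξ₁ + (2*(t*(1 - Real.cos δ))) • e0 ∈ P := by
      have := Submodule.add_mem P hp hm
      convert this using 1
      module
    have he0P : e0 ∈ P := by
      have h1 : (2*(t*(1 - Real.cos δ))) • e0 ∈ P := by
        have := Submodule.sub_mem P hsum (Submodule.smul_mem P (2 * Real.cos δ) hξ₁P)
        convert this using 1
        module
      have hne : (2*(t*(1 - Real.cos δ))) ≠ 0 :=
        ne_of_gt (mul_pos two_pos (mul_pos ht (by linarith)))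
      have := Submodule.smul_mem P (2*(t*(1 - Real.cos δ)))⁻¹ h1
      rwa [smul_smul, inv_mul_cancel₀ hne, one_smul] at this
    have hwP : w ∈ P := by
      have hsδ : Real.sin δ ≠ 0 := by
        have := Real.sin_pos_of_pos_of_lt_pi hδpos (by linarith [Real.pi_gt_three])
        linarith
      have hne : (t * Real.sin δ) ≠ 0 := by positivity
      have h1 : (t * Real.sin δ) • w ∈ P := by
        have := Submodule.sub_mem P (Submodule.sub_mem P hp
          (Submodule.smul_mem P (Real.cos δ) hξ₁P))
          (Submodule.smul_mem P (t*(1 - Real.cos δ)) he0P)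
        convert this using 1
        module
      have := Submodule.smul_mem P (t * Real.sin δ)⁻¹ h1
      rwa [smul_smul, inv_mul_cancel₀ hne, one_smul] at this
    obtain ⟨a, b, hab⟩ := Submodule.mem_span_pair.mp he0P
    obtain ⟨c, d, hcd⟩ := Submodule.mem_span_pair.mp hwP
    have hkey : (c*b - a*d) • ξ₁ = c • e0 - a • w := by
      rw [← hab, ← hcd]; module
    have ha0 : a = 0 := by
      have h := congrArg (fun v => (inner ℝ v w : ℝ)) hkey
      simp only [real_inner_smul_left, inner_sub_left] at h
      rw [real_inner_self_eq_norm_sq, hw_norm] at h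
      rw [hw1, hwe0] at h
      linarith [h]
    rw [ha0, zero_smul, zero_add] at hab
    -- e0 = b • ξ₁ contradicts minkQ e0 = -1
    have : minkQ n e0 = b^2 * minkQ n ξ₁ := by
      rw [← hab]
      have : (b • ξ₁ : EuclideanSpace ℝ (Fin (n+1))) = b • ξ₁ + (0:ℝ) • ξ₁ + (0:ℝ) • ξ₁ := by module
      rw [this, minkQ_comb, hB11]
      ring
    rw [heQ, hq1] at this
    norm_num at this
  obtain ⟨θ, hcosθ, hsinθ, hθP⟩ := hdich
  obtain ⟨hQ2, h20, hB12, hn2⟩ := key θ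
  set ξ₂ := Real.cos θ • ξ₁ + (t*(1 - Real.cos θ)) • e0 + (t * Real.sin θ) • w with hξ₂_def
  clear_value ξ₂
  clear key hξ₂_def
  rw [hcosθ] at hB12
  rw [hcosθ, hsinθ] at hn2
  have hξ₂ne : ξ₂ ≠ 0 := by
    intro h0
    rw [h0] at h20
    simp at h20
    rw [← h20] at ht
    exact lt_irrefl _ ht
  have hξ₂l : IsFutureLightlike n ξ₂ := ⟨hξ₂ne, hQ2, by rw [h20]; exact ht⟩
  -- distance bound for ξ₂
  have h1cos : 1 - Real.cos δ ≤ δ := by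
    have hδδ : δ*δ ≤ δ*1 := mul_le_mul_of_nonneg_left hδ1 hδpos.le
    have := Real.one_sub_sq_div_two_le_cos (x := δ)
    nlinarith [this, hδδ]
  have hsinb : |Real.sin δ| ≤ δ := le_trans Real.abs_sin_le_abs (le_of_eq (abs_of_pos hδpos))
  have hδC : δ * C ≤ ε := by
    rw [← le_div_iff₀ hC]; exact hδε
  have hd2 : ‖ξ₂ - ξ₁‖ < ε := by
    refine lt_of_le_of_lt hn2 ?_
    rw [hC_def] at hδC
    have e1 : (1 - Real.cos δ)*(‖ξ₁‖+t) ≤ δ*(‖ξ₁‖+t) :=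
      mul_le_mul_of_nonneg_right h1cos (by positivity)
    have e2 : t*|Real.sin δ| ≤ t*δ := mul_le_mul_of_nonneg_left hsinb ht.le
    linarith [hδpos, ht, norm_nonneg ξ₁, e1, e2]
  have hKneg : mB n ξ₁ ξ₂ < 0 := by
    rw [hB12]
    have h2 : 0 < t^2*(1 - Real.cos δ) := mul_pos (pow_pos ht 2) (by linarith)
    linarith
  -- ξ₀ is not in span {ξ₁, ξ₂}
  have hξ₀sp : ξ₀ ∉ Submodule.span ℝ ({ξ₁, ξ₂} : Set (EuclideanSpace ℝ (Fin (n+1)))) := by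
    intro hmem
    obtain ⟨a, b, hab⟩ := Submodule.mem_span_pair.mp hmem
    by_cases hb : b = 0
    · rw [hb, zero_smul, add_zero] at hab
      exact h₀₁ a hab.symm
    · apply hθP
      refine Submodule.mem_span_pair.mpr ⟨b⁻¹, -(a/b), ?_⟩
      rw [← hab]
      match_scalars
      · field_simp; ring
      · field_simp
  -- the open set V
  refine ⟨Metric.ball ξ₀ 1 ∩ (↑(Submodule.span ℝ ({ξ₁, ξ₂} : Set (EuclideanSpace ℝ (Fin (n+1))))) : Set _)ᶜ,
    ξ₂, ?_, ⟨Metric.mem_ball_self one_pos, hξ₀sp⟩, hξ₂l, hd2, ?_⟩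
  · exact Metric.isOpen_ball.inter (Submodule.closed_of_finiteDimensional _).isOpen_compl
  intro η hη
  obtain ⟨hηb, hηsp⟩ := hη
  rw [Set.mem_compl_iff, SetLike.mem_coe] at hηsp
  have hηn : ‖η‖ < ‖ξ₀‖ + 1 := by
    have h1 : ‖η - ξ₀‖ < 1 := by
      rw [← dist_eq_norm]; exact hηb
    have h2 := norm_sub_norm_le η ξ₀
    linarith
  -- scalar quantities
  set K := mB n ξ₁ ξ₂ with hK_def
  have hKpos : 0 < -K := neg_pos.mpr hKneg
  set P1 := mB n ξ₁ η with hP1_def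
  set P2 := mB n ξ₂ η with hP2_def
  set Q := minkQ n η with hQ_def
  set ε' : ℝ := min ε t with hε'_def
  have hε'pos : 0 < ε' := lt_min hε ht
  have hε'ε : ε' ≤ ε := min_le_left _ _
  have hε't : ε' ≤ t := min_le_right _ _
  set R : ℝ := (|Q| + 2*|P1|) * ‖ξ₂‖ + ‖η‖ * (-K) with hR_def
  have hRnn : 0 ≤ R := by
    rw [hR_def]
    exact add_nonneg (by positivity) (mul_nonneg (norm_nonneg _) hKpos.le)
  have hR1 : 0 < R + 1 := by linarith
  set c : ℝ := min 1 (min ((-K)/(2*|P2|+1)) (ε'*(-K)/(R+1))) with hc_def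
  have hc : 0 < c := lt_min one_pos (lt_min (div_pos hKpos (by positivity))
    (div_pos (mul_pos hε'pos hKpos) hR1))
  have hc1 : c ≤ 1 := min_le_left _ _
  have hc2' : c*(2*|P2|+1) ≤ -K := by
    rw [← le_div_iff₀ (by positivity)]
    exact le_trans (min_le_right _ _) (min_le_left _ _)
  have hc3' : c*(R+1) ≤ ε'*(-K) := by
    rw [← le_div_iff₀ hR1]
    exact le_trans (min_le_right _ _) (min_le_right _ _)
  clear_value c ε'
  clear hc_def hε'_def
  -- the coefficient b and the vector ξ₃
  have hcP2 : c*P2 ≤ c*|P2| := mul_le_mul_of_nonneg_left (le_abs_self P2) hc.le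
  have hDneg : K + c * P2 < 0 := by linarith [abs_nonneg P2]
  have hD2 : -K ≤ 2*(-(K + c*P2)) := by linarith
  have hDne : K + c * P2 ≠ 0 := ne_of_lt hDneg
  set b : ℝ := -(c*Q + 2*P1)*c / (2*(K + c*P2)) with hb_def
  have hbD : b * (2*(K + c*P2)) = -(c*Q + 2*P1)*c := by
    rw [hb_def]; field_simp
  clear_value b
  clear hb_def
  set ξ₃ := ξ₁ + (b • ξ₂ + c • η) with hξ₃_def
  -- ξ₃ is null
  have hξ₃Q : minkQ n ξ₃ = 0 := by
    have hform : ξ₃ = (1:ℝ) • ξ₁ + b • ξ₂ + c • η := by rw [hξ₃_def]; module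
    rw [hform, minkQ_comb, hq1, hQ2, ← hK_def, ← hP1_def, ← hP2_def, ← hQ_def]
    linear_combination hbD
  -- distance bound for ξ₃
  have htri : |c*Q + 2*P1| ≤ |Q| + 2*|P1| := by
    refine le_trans (abs_add_le _ _) ?_
    rw [abs_mul, abs_mul]
    have : |c| * |Q| ≤ 1 * |Q| :=
      mul_le_mul_of_nonneg_right (by rw [abs_of_pos hc]; exact hc1) (abs_nonneg _)
    simp only [abs_two] at *
    linarith [abs_nonneg Q]
  have habs_b : |b| * (2*(-(K + c*P2))) = c * |c*Q + 2*P1| := by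
    have h := congrArg abs hbD
    simp only [abs_mul, abs_neg, abs_two] at h
    rw [abs_of_pos hc, abs_of_neg hDneg] at h
    linarith [h]
  have f1 : |b| * (-K) ≤ c * (|Q| + 2*|P1|) := by
    have g1 := mul_le_mul_of_nonneg_left hD2 (abs_nonneg b)
    have g2 := mul_le_mul_of_nonneg_left htri hc.le
    linarith [habs_b]
  have hnormd : ‖b • ξ₂ + c • η‖ < ε' := by
    have h1 : ‖b • ξ₂ + c • η‖ ≤ |b| * ‖ξ₂‖ + c * ‖η‖ := by
      refine le_trans (norm_add_le _ _) ?_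
      rw [norm_smul, norm_smul, Real.norm_eq_abs, Real.norm_eq_abs, abs_of_pos hc]
    refine lt_of_le_of_lt h1 ?_
    have hA : |b| * (-K) * ‖ξ₂‖ ≤ c * (|Q| + 2*|P1|) * ‖ξ₂‖ :=
      mul_le_mul_of_nonneg_right f1 (norm_nonneg ξ₂)
    have hB : (|b| * ‖ξ₂‖ + c * ‖η‖) * (-K) ≤ c * R := by
      rw [hR_def]; linarith [hA]
    have hC2 : c * R < ε' * (-K) := by linarith
    exact lt_of_mul_lt_mul_right (by linarith) hKpos.le
  have hd3 : ‖ξ₃ - ξ₁‖ < ε' := by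
    rw [show ξ₃ - ξ₁ = b • ξ₂ + c • η by rw [hξ₃_def]; abel]
    exact hnormd
  -- ξ₃ is future pointing
  have hξ₃0 : 0 < ξ₃ 0 := by
    have h0 : ξ₃ 0 = ξ₁ 0 + (b • ξ₂ + c • η) 0 := by rw [hξ₃_def]; simp [PiLp.add_apply]
    have habs := coord_abs_le_norm n (b • ξ₂ + c • η) 0
    have h2 : |(b • ξ₂ + c • η) 0| < t := lt_of_le_of_lt habs (lt_of_lt_of_le hnormd hε't)
    rw [h0, ← ht_def]
    have := abs_lt.mp h2
    linarith [this.1]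
  have hξ₃ne : ξ₃ ≠ 0 := by
    intro h0
    rw [h0] at hξ₃0
    simp at hξ₃0
  -- span membership
  have m1 : ξ₁ ∈ Submodule.span ℝ ({ξ₁, ξ₂, ξ₃} : Set (EuclideanSpace ℝ (Fin (n+1)))) :=
    Submodule.subset_span (by simp)
  have m2 : ξ₂ ∈ Submodule.span ℝ ({ξ₁, ξ₂, ξ₃} : Set (EuclideanSpace ℝ (Fin (n+1)))) :=
    Submodule.subset_span (by simp)
  have m3 : ξ₃ ∈ Submodule.span ℝ ({ξ₁, ξ₂, ξ₃} : Set (EuclideanSpace ℝ (Fin (n+1)))) :=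
    Submodule.subset_span (by simp)
  have hηval : η = c⁻¹ • (ξ₃ - ξ₁ - b • ξ₂) := by
    rw [hξ₃_def, show ξ₁ + (b • ξ₂ + c • η) - ξ₁ - b • ξ₂ = c • η from by module,
      smul_smul, inv_mul_cancel₀ (ne_of_gt hc), one_smul]
  have hspan : η ∈ Submodule.span ℝ ({ξ₁, ξ₂, ξ₃} : Set (EuclideanSpace ℝ (Fin (n+1)))) := by
    rw [hηval]
    exact Submodule.smul_mem _ _ (Submodule.sub_mem _ (Submodule.sub_mem _ m3 m1)
      (Submodule.smul_mem _ _ m2))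
  -- η is not a multiple of ξ₁, ξ₂, ξ₃
  have hnm1 : ∀ a : ℝ, η ≠ a • ξ₁ := by
    intro a h
    apply hηsp
    rw [h]
    exact Submodule.smul_mem _ _ (Submodule.subset_span (by simp))
  have hnm2 : ∀ a : ℝ, η ≠ a • ξ₂ := by
    intro a h
    apply hηsp
    rw [h]
    exact Submodule.smul_mem _ _ (Submodule.subset_span (by simp))
  have hnm3 : ∀ a : ℝ, η ≠ a • ξ₃ := by
    intro a h
    rw [hξ₃_def] at h
    have hkey : (1 - a*c) • η = a • ξ₁ + (a*b) • ξ₂ := by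
      calc (1 - a*c) • η = a • (ξ₁ + (b • ξ₂ + c • η)) - (a*c) • η := by rw [← h]; module
        _ = a • ξ₁ + (a*b) • ξ₂ := by module
    by_cases hac : 1 - a*c = 0
    · rw [hac, zero_smul] at hkey
      have ha : a ≠ 0 := by
        intro h0
        rw [h0] at hac
        norm_num at hac
      have h2 : a • ξ₁ = a • ((-b) • ξ₂) := by
        have h3 : a • ξ₁ + (a*b) • ξ₂ = 0 := hkey.symm
        calc a • ξ₁ = (a • ξ₁ + (a*b) • ξ₂) - (a*b) • ξ₂ := by module
          _ = a • ((-b) • ξ₂) := by rw [h3]; module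
      have hξ₁eq : ξ₁ = (-b) • ξ₂ := smul_right_injective _ ha h2
      by_cases hb0 : b = 0
      · rw [hb0] at hξ₁eq
        simp at hξ₁eq
        exact hξ₁ne hξ₁eq
      · apply hθP
        refine Submodule.mem_span_pair.mpr ⟨0, (-b)⁻¹, ?_⟩
        rw [hξ₁eq, zero_smul, zero_add, smul_smul,
          inv_mul_cancel₀ (neg_ne_zero.mpr hb0), one_smul]
    · apply hηsp
      have hval : η = (1 - a*c)⁻¹ • (a • ξ₁ + (a*b) • ξ₂) := by
        rw [← hkey, smul_smul, inv_mul_cancel₀ hac, one_smul]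
      rw [hval]
      refine Submodule.smul_mem _ _ (Submodule.add_mem _
        (Submodule.smul_mem _ _ (Submodule.subset_span (by simp)))
        (Submodule.smul_mem _ _ (Submodule.subset_span (by simp))))
  exact ⟨ξ₃, ⟨hξ₃ne, hξ₃Q, hξ₃0⟩, lt_of_lt_of_le hd3 hε'ε, hspan, hnm1, hnm2, hnm3⟩
end
end
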